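/- Let μ, σ, Δ, λ > 0, a ≥ 0, and define r(x;a) = (x+μΔ-a-λ)·N((x+μΔ)/(σ√Δ)) + σ√Δ·φ₀((x+μΔ)/(σ√Δ)) - e^{-2μx/σ²}·((-x+μΔ-a-λ)·N((-x+μΔ)/(σ√Δ)) + σ√Δ·φ₀((-x+μΔ)/(σ√Δ))), where N and φ₀ are the standard normal CDF and density. Then as x → ∞: r(x;a) → ∞, r'(x;a) → 1, and r''(x;a) → 0. -/

import Mathlib

open Real Filter MeasureTheory Topology

/-- The standard normal cumulative distribution function. -/
noncomputable def stdNormalCDF (t : ℝ) : ℝ :=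
  ∫ u in Set.Iio t, (1 / Real.sqrt (2 * Real.pi)) * Real.exp (-u ^ 2 / 2)

/-- The standard normal density. -/
noncomputable def stdNormalPDF (t : ℝ) : ℝ :=
  (1 / Real.sqrt (2 * Real.pi)) * Real.exp (-t ^ 2 / 2)

lemma continuous_stdNormalPDF : Continuous stdNormalPDF := by
  unfold stdNormalPDF; fun_prop

lemma stdNormalPDF_nonneg (t : ℝ) : 0 ≤ stdNormalPDF t :=
  mul_nonneg (by positivity) (Real.exp_nonneg _)

lemma stdNormalPDF_le (t : ℝ) : stdNormalPDF t ≤ 1 / Real.sqrt (2 * Real.pi) := by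
  have h : Real.exp (-t ^ 2 / 2) ≤ 1 := Real.exp_le_one_iff.2 (by nlinarith [sq_nonneg t])
  calc stdNormalPDF t ≤ (1 / Real.sqrt (2 * Real.pi)) * 1 :=
        mul_le_mul_of_nonneg_left h (by positivity)
    _ = _ := mul_one _

lemma integrable_stdNormalPDF : Integrable stdNormalPDF := by
  have : stdNormalPDF = fun u => (1 / Real.sqrt (2 * Real.pi)) * Real.exp (-(1/2) * u ^ 2) := by
    funext u; unfold stdNormalPDF; congr 1; ring_nf
  rw [this]
  exact (integrable_exp_neg_mul_sq (by norm_num)).const_mul _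

lemma integral_stdNormalPDF : ∫ u, stdNormalPDF u = 1 := by
  have h1 : ∫ u, stdNormalPDF u = (1 / Real.sqrt (2 * Real.pi)) * ∫ u : ℝ, Real.exp (-(1/2) * u ^ 2) := by
    rw [← integral_const_mul]; congr 1; funext u; unfold stdNormalPDF; congr 1; ring_nf
  rw [h1, integral_gaussian]
  have : (π / (1/2)) = 2 * π := by ring
  rw [this]
  have h2 : Real.sqrt (2*π) ≠ 0 := by positivity
  field_simp

lemma stdNormalCDF_eq (t : ℝ) :
    stdNormalCDF t = (∫ x in Set.Iic (0:ℝ), stdNormalPDF x) + ∫ x in (0:ℝ)..t, stdNormalPDF x := by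
  rw [← intervalIntegral.integral_Iic_sub_Iic integrable_stdNormalPDF.integrableOn
    integrable_stdNormalPDF.integrableOn]
  rw [show stdNormalCDF t = ∫ u in Set.Iio t, stdNormalPDF u from rfl,
    ← MeasureTheory.integral_Iic_eq_integral_Iio]
  ring

lemma stdNormalCDF_nonneg (t : ℝ) : 0 ≤ stdNormalCDF t := by
  rw [show stdNormalCDF t = ∫ u in Set.Iio t, stdNormalPDF u from rfl]
  exact setIntegral_nonneg measurableSet_Iio fun x _ => stdNormalPDF_nonneg x

lemma stdNormalCDF_le_one (t : ℝ) : stdNormalCDF t ≤ 1 := by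
  rw [show stdNormalCDF t = ∫ u in Set.Iio t, stdNormalPDF u from rfl, ← integral_stdNormalPDF]
  exact setIntegral_le_integral integrable_stdNormalPDF
    (Eventually.of_forall fun x => stdNormalPDF_nonneg x)

lemma hasDerivAt_stdNormalCDF (t : ℝ) : HasDerivAt stdNormalCDF (stdNormalPDF t) t := by
  have h : HasDerivAt (fun u => ∫ x in (0:ℝ)..u, stdNormalPDF x) (stdNormalPDF t) t :=
    intervalIntegral.integral_hasDerivAt_right
      (continuous_stdNormalPDF.intervalIntegrable 0 t)
      (continuous_stdNormalPDF.stronglyMeasurableAtFilter _ _)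
      continuous_stdNormalPDF.continuousAt
  have := h.const_add (∫ x in Set.Iic (0:ℝ), stdNormalPDF x)
  exact this.congr_of_eventuallyEq (Eventually.of_forall fun u => (stdNormalCDF_eq u))

lemma tendsto_stdNormalCDF_atTop : Tendsto stdNormalCDF atTop (𝓝 1) := by
  have h : Tendsto (fun t => ∫ x in (0:ℝ)..t, stdNormalPDF x) atTop
      (𝓝 (∫ x in Set.Ioi (0:ℝ), stdNormalPDF x)) :=
    intervalIntegral_tendsto_integral_Ioi 0 integrable_stdNormalPDF.integrableOn tendsto_id
  have h2 := h.const_add (∫ x in Set.Iic (0:ℝ), stdNormalPDF x)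
  have h3 : (∫ x in Set.Iic (0:ℝ), stdNormalPDF x) + ∫ x in Set.Ioi (0:ℝ), stdNormalPDF x = 1 := by
    rw [intervalIntegral.integral_Iic_add_Ioi integrable_stdNormalPDF.integrableOn
      integrable_stdNormalPDF.integrableOn, integral_stdNormalPDF]
  rw [h3] at h2
  exact h2.congr fun t => (stdNormalCDF_eq t).symm

lemma hasDerivAt_stdNormalPDF (t : ℝ) :
    HasDerivAt stdNormalPDF (-t * stdNormalPDF t) t := by
  have h1 : HasDerivAt (fun u : ℝ => -u ^ 2 / 2) (-t) t := by
    have := ((hasDerivAt_pow 2 t).neg).div_const 2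
    simpa using this.congr_deriv (by push_cast; ring)
  have h2 := h1.exp
  have h3 := h2.const_mul (1 / Real.sqrt (2 * Real.pi))
  exact h3.congr_deriv (by unfold stdNormalPDF; ring)

lemma tendsto_stdNormalPDF_atTop : Tendsto stdNormalPDF atTop (𝓝 0) := by
  have h1 : Tendsto (fun t : ℝ => -t ^ 2 / 2) atTop atBot := by
    apply Tendsto.atBot_div_const (by norm_num : (0:ℝ) < 2)
    exact tendsto_neg_atBot_iff.2 (tendsto_pow_atTop two_ne_zero)
  have h2 := (Real.tendsto_exp_atBot.comp h1).const_mul (1 / Real.sqrt (2 * Real.pi))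
  rw [mul_zero] at h2
  exact h2.congr fun t => rfl

lemma stdNormalPDF_neg (t : ℝ) : stdNormalPDF (-t) = stdNormalPDF t := by
  unfold stdNormalPDF; ring_nf

lemma tendsto_stdNormalPDF_atBot : Tendsto stdNormalPDF atBot (𝓝 0) := by
  have := tendsto_stdNormalPDF_atTop.comp tendsto_neg_atBot_atTop
  refine this.congr fun t => ?_
  simp [Function.comp, stdNormalPDF_neg]

lemma tendsto_id_mul_stdNormalPDF_atTop :
    Tendsto (fun t => t * stdNormalPDF t) atTop (𝓝 0) := by
  have hb : Tendsto (fun t : ℝ => (1 / Real.sqrt (2 * Real.pi)) * (t * Real.exp (-t))) atTop (𝓝 0) := by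
    have := (Real.tendsto_pow_mul_exp_neg_atTop_nhds_zero 1).const_mul (1 / Real.sqrt (2 * Real.pi))
    simpa using this
  apply squeeze_zero' ?_ ?_ hb
  · filter_upwards [eventually_ge_atTop (0:ℝ)] with t ht
    exact mul_nonneg ht (mul_nonneg (by positivity) (Real.exp_nonneg _))
  · filter_upwards [eventually_ge_atTop (2:ℝ)] with t ht
    have h1 : Real.exp (-t ^ 2 / 2) ≤ Real.exp (-t) := by
      apply Real.exp_le_exp.2; nlinarith
    unfold stdNormalPDF
    have h0 : (0:ℝ) ≤ 1 / Real.sqrt (2 * Real.pi) := by positivity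
    calc t * ((1 / Real.sqrt (2 * Real.pi)) * Real.exp (-t ^ 2 / 2))
        ≤ t * ((1 / Real.sqrt (2 * Real.pi)) * Real.exp (-t)) := by
          apply mul_le_mul_of_nonneg_left (mul_le_mul_of_nonneg_left h1 h0) (by linarith)
      _ = (1 / Real.sqrt (2 * Real.pi)) * (t * Real.exp (-t)) := by ring

lemma tendsto_id_mul_stdNormalPDF_atBot :
    Tendsto (fun t => t * stdNormalPDF t) atBot (𝓝 0) := by
  have := (tendsto_id_mul_stdNormalPDF_atTop.comp tendsto_neg_atBot_atTop).neg
  rw [neg_zero] at this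
  refine this.congr fun t => ?_
  simp [Function.comp, stdNormalPDF_neg]

lemma tendsto_exp_neg_mul_linear {m : ℝ} (hm : 0 < m) (p q : ℝ) :
    Tendsto (fun x => Real.exp (-(m * x)) * (p * x + q)) atTop (𝓝 0) := by
  have h1 : Tendsto (fun y : ℝ => y * Real.exp (-y)) atTop (𝓝 0) := by
    have := Real.tendsto_pow_mul_exp_neg_atTop_nhds_zero 1
    simpa using this
  have hmx : Tendsto (fun x : ℝ => m * x) atTop atTop :=
    tendsto_id.const_mul_atTop hm
  have h2 : Tendsto (fun x : ℝ => (m * x) * Real.exp (-(m * x))) atTop (𝓝 0) :=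
    h1.comp hmx
  have h3 : Tendsto (fun x : ℝ => Real.exp (-(m * x))) atTop (𝓝 0) :=
    Real.tendsto_exp_atBot.comp (tendsto_neg_atBot_iff.2 hmx)
  have h4 := (h2.const_mul (p / m)).add (h3.const_mul q)
  have h5 : (p / m) * 0 + q * 0 = 0 := by ring
  rw [h5] at h4
  refine h4.congr fun x => ?_
  field_simp

lemma tendsto_atTop_add_nhds {f g : ℝ → ℝ} {C : ℝ} (hf : Tendsto f atTop atTop)
    (hg : Tendsto g atTop (𝓝 C)) : Tendsto (fun x => f x + g x) atTop atTop := by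
  apply tendsto_atTop_mono' atTop ?_ (tendsto_atTop_add_const_right atTop (C - 1) hf)
  filter_upwards [hg.eventually (eventually_ge_nhds (show C - 1 < C by linarith))] with x hx
  linarith

theorem BM_aux (k m c d : ℝ) (hk : 0 < k) (hm : 0 < m) (r : ℝ → ℝ)
    (hr : r = fun x =>
      ((x + d - c) * stdNormalCDF ((x + d) / k) + k * stdNormalPDF ((x + d) / k))
        - Real.exp (-(m * x)) *
            ((-x + d - c) * stdNormalCDF ((-x + d) / k) + k * stdNormalPDF ((-x + d) / k))) :
    Tendsto r atTop atTop ∧ Tendsto (deriv r) atTop (nhds 1) ∧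
      Tendsto (deriv (deriv r)) atTop (nhds 0) := by
  subst hr
  -- derivative building blocks
  have hds : ∀ x : ℝ, HasDerivAt (fun y : ℝ => (y + d) / k) (1 / k) x := by
    intro x
    have := ((hasDerivAt_id x).add_const d).div_const k
    simpa using this
  have hdt : ∀ x : ℝ, HasDerivAt (fun y : ℝ => (-y + d) / k) (-1 / k) x := by
    intro x
    have := (((hasDerivAt_id x).neg).add_const d).div_const k
    simpa using this
  have hNs : ∀ x : ℝ, HasDerivAt (fun y : ℝ => stdNormalCDF ((y + d) / k))
      (stdNormalPDF ((x + d) / k) * (1 / k)) x := fun x =>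
    (hasDerivAt_stdNormalCDF _).comp x (hds x)
  have hφs : ∀ x : ℝ, HasDerivAt (fun y : ℝ => stdNormalPDF ((y + d) / k))
      ((-((x + d) / k) * stdNormalPDF ((x + d) / k)) * (1 / k)) x := fun x =>
    (hasDerivAt_stdNormalPDF _).comp x (hds x)
  have hNt : ∀ x : ℝ, HasDerivAt (fun y : ℝ => stdNormalCDF ((-y + d) / k))
      (stdNormalPDF ((-x + d) / k) * (-1 / k)) x := fun x =>
    (hasDerivAt_stdNormalCDF _).comp x (hdt x)
  have hφt : ∀ x : ℝ, HasDerivAt (fun y : ℝ => stdNormalPDF ((-y + d) / k))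
      ((-((-x + d) / k) * stdNormalPDF ((-x + d) / k)) * (-1 / k)) x := fun x =>
    (hasDerivAt_stdNormalPDF _).comp x (hdt x)
  have hE : ∀ x : ℝ, HasDerivAt (fun y : ℝ => Real.exp (-(m * y))) (-m * Real.exp (-(m * x))) x := by
    intro x
    have h1 : HasDerivAt (fun y : ℝ => -(m * y)) (-m) x := by
      exact (((hasDerivAt_id x).const_mul m).neg).congr_deriv (by ring)
    have := h1.exp
    convert this using 1
    ring
  -- first derivative
  have hA : ∀ x : ℝ, HasDerivAt
      (fun y : ℝ => (y + d - c) * stdNormalCDF ((y + d) / k) + k * stdNormalPDF ((y + d) / k))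
      (stdNormalCDF ((x + d) / k) - c / k * stdNormalPDF ((x + d) / k)) x := by
    intro x
    have h1 : HasDerivAt (fun y : ℝ => y + d - c) 1 x := by
      simpa using ((hasDerivAt_id x).add_const d).sub_const c
    have h4 := (h1.mul (hNs x)).add ((hφs x).const_mul k)
    refine h4.congr_deriv ?_
    field_simp
    ring
  have hB : ∀ x : ℝ, HasDerivAt
      (fun y : ℝ => (-y + d - c) * stdNormalCDF ((-y + d) / k) + k * stdNormalPDF ((-y + d) / k))
      (-stdNormalCDF ((-x + d) / k) + c / k * stdNormalPDF ((-x + d) / k)) x := by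
    intro x
    have h1 : HasDerivAt (fun y : ℝ => -y + d - c) (-1) x := by
      simpa using (((hasDerivAt_id x).neg).add_const d).sub_const c
    have h4 := (h1.mul (hNt x)).add ((hφt x).const_mul k)
    refine h4.congr_deriv ?_
    field_simp
    ring
  have hR1 : ∀ x : ℝ, HasDerivAt
      (fun x : ℝ =>
        ((x + d - c) * stdNormalCDF ((x + d) / k) + k * stdNormalPDF ((x + d) / k))
          - Real.exp (-(m * x)) *
              ((-x + d - c) * stdNormalCDF ((-x + d) / k) + k * stdNormalPDF ((-x + d) / k)))
      ((stdNormalCDF ((x + d) / k) - c / k * stdNormalPDF ((x + d) / k))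
        - (-m * Real.exp (-(m * x)) *
              ((-x + d - c) * stdNormalCDF ((-x + d) / k) + k * stdNormalPDF ((-x + d) / k))
            + Real.exp (-(m * x)) *
              (-stdNormalCDF ((-x + d) / k) + c / k * stdNormalPDF ((-x + d) / k)))) x := by
    intro x
    exact (hA x).sub ((hE x).mul (hB x))

  have hderiv1 : deriv (fun x : ℝ =>
      ((x + d - c) * stdNormalCDF ((x + d) / k) + k * stdNormalPDF ((x + d) / k))
        - Real.exp (-(m * x)) *
            ((-x + d - c) * stdNormalCDF ((-x + d) / k) + k * stdNormalPDF ((-x + d) / k)))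
      = fun x : ℝ =>
      (stdNormalCDF ((x + d) / k) - c / k * stdNormalPDF ((x + d) / k))
        - (-m * Real.exp (-(m * x)) *
              ((-x + d - c) * stdNormalCDF ((-x + d) / k) + k * stdNormalPDF ((-x + d) / k))
            + Real.exp (-(m * x)) *
              (-stdNormalCDF ((-x + d) / k) + c / k * stdNormalPDF ((-x + d) / k))) :=
    funext fun x => (hR1 x).deriv
  -- second derivative
  have hdA2 : ∀ x : ℝ, HasDerivAt
      (fun y : ℝ => stdNormalCDF ((y + d) / k) - c / k * stdNormalPDF ((y + d) / k))
      (stdNormalPDF ((x + d) / k) * (1 / k)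
        - c / k * ((-((x + d) / k) * stdNormalPDF ((x + d) / k)) * (1 / k))) x :=
    fun x => (hNs x).sub ((hφs x).const_mul (c / k))
  have hE' : ∀ x : ℝ, HasDerivAt (fun y : ℝ => -m * Real.exp (-(m * y)))
      (-m * (-m * Real.exp (-(m * x)))) x := fun x => (hE x).const_mul (-m)
  have hdB2 : ∀ x : ℝ, HasDerivAt
      (fun y : ℝ => -stdNormalCDF ((-y + d) / k) + c / k * stdNormalPDF ((-y + d) / k))
      (-(stdNormalPDF ((-x + d) / k) * (-1 / k))
        + c / k * ((-((-x + d) / k) * stdNormalPDF ((-x + d) / k)) * (-1 / k))) x :=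
    fun x => ((hNt x).neg).add ((hφt x).const_mul (c / k))
  have hR2 : ∀ x : ℝ, HasDerivAt
      (fun x : ℝ =>
        (stdNormalCDF ((x + d) / k) - c / k * stdNormalPDF ((x + d) / k))
          - (-m * Real.exp (-(m * x)) *
                ((-x + d - c) * stdNormalCDF ((-x + d) / k) + k * stdNormalPDF ((-x + d) / k))
              + Real.exp (-(m * x)) *
                (-stdNormalCDF ((-x + d) / k) + c / k * stdNormalPDF ((-x + d) / k))))
      ((stdNormalPDF ((x + d) / k) * (1 / k)
          - c / k * ((-((x + d) / k) * stdNormalPDF ((x + d) / k)) * (1 / k)))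
        - ((-m * (-m * Real.exp (-(m * x))) *
                ((-x + d - c) * stdNormalCDF ((-x + d) / k) + k * stdNormalPDF ((-x + d) / k))
              + -m * Real.exp (-(m * x)) *
                (-stdNormalCDF ((-x + d) / k) + c / k * stdNormalPDF ((-x + d) / k)))
            + (-m * Real.exp (-(m * x)) *
                (-stdNormalCDF ((-x + d) / k) + c / k * stdNormalPDF ((-x + d) / k))
              + Real.exp (-(m * x)) *
                (-(stdNormalPDF ((-x + d) / k) * (-1 / k))
                  + c / k * ((-((-x + d) / k) * stdNormalPDF ((-x + d) / k)) * (-1 / k)))))) x :=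
    fun x => (hdA2 x).sub (((hE' x).mul (hB x)).add ((hE x).mul (hdB2 x)))
  have hderiv2 : (deriv fun x : ℝ =>
      (stdNormalCDF ((x + d) / k) - c / k * stdNormalPDF ((x + d) / k))
        - (-m * Real.exp (-(m * x)) *
              ((-x + d - c) * stdNormalCDF ((-x + d) / k) + k * stdNormalPDF ((-x + d) / k))
            + Real.exp (-(m * x)) *
              (-stdNormalCDF ((-x + d) / k) + c / k * stdNormalPDF ((-x + d) / k))))
      = fun x : ℝ =>
      (stdNormalPDF ((x + d) / k) * (1 / k)
          - c / k * ((-((x + d) / k) * stdNormalPDF ((x + d) / k)) * (1 / k)))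
        - ((-m * (-m * Real.exp (-(m * x))) *
                ((-x + d - c) * stdNormalCDF ((-x + d) / k) + k * stdNormalPDF ((-x + d) / k))
              + -m * Real.exp (-(m * x)) *
                (-stdNormalCDF ((-x + d) / k) + c / k * stdNormalPDF ((-x + d) / k)))
            + (-m * Real.exp (-(m * x)) *
                (-stdNormalCDF ((-x + d) / k) + c / k * stdNormalPDF ((-x + d) / k))
              + Real.exp (-(m * x)) *
                (-(stdNormalPDF ((-x + d) / k) * (-1 / k))
                  + c / k * ((-((-x + d) / k) * stdNormalPDF ((-x + d) / k)) * (-1 / k))))) :=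
    funext fun x => (hR2 x).deriv
  -- limits
  have hstop : Tendsto (fun x : ℝ => (x + d) / k) atTop atTop :=
    (tendsto_atTop_add_const_right atTop d tendsto_id).atTop_div_const hk
  have htbot : Tendsto (fun x : ℝ => (-x + d) / k) atTop atBot := by
    apply Tendsto.atBot_div_const hk
    exact tendsto_atBot_add_const_right atTop d tendsto_neg_atTop_atBot
  have lN1 : Tendsto (fun x : ℝ => stdNormalCDF ((x + d) / k)) atTop (nhds 1) :=
    tendsto_stdNormalCDF_atTop.comp hstop
  have lφs : Tendsto (fun x : ℝ => stdNormalPDF ((x + d) / k)) atTop (nhds 0) :=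
    tendsto_stdNormalPDF_atTop.comp hstop
  have lφt : Tendsto (fun x : ℝ => stdNormalPDF ((-x + d) / k)) atTop (nhds 0) :=
    tendsto_stdNormalPDF_atBot.comp htbot
  have lsφs : Tendsto (fun x : ℝ => (x + d) / k * stdNormalPDF ((x + d) / k)) atTop (nhds 0) :=
    tendsto_id_mul_stdNormalPDF_atTop.comp hstop
  have ltφt : Tendsto (fun x : ℝ => (-x + d) / k * stdNormalPDF ((-x + d) / k)) atTop (nhds 0) :=
    tendsto_id_mul_stdNormalPDF_atBot.comp htbot
  have lE : Tendsto (fun x : ℝ => Real.exp (-(m * x))) atTop (nhds 0) := by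
    apply Real.tendsto_exp_atBot.comp
    apply tendsto_neg_atBot_iff.2
    exact tendsto_id.const_mul_atTop hm
  have hNbdd : Filter.IsBoundedUnder (· ≤ ·) atTop
      (fun x : ℝ => ‖stdNormalCDF ((-x + d) / k)‖) :=
    isBoundedUnder_of ⟨1, fun x => by
      rw [Real.norm_eq_abs, abs_of_nonneg (stdNormalCDF_nonneg _)]
      exact stdNormalCDF_le_one _⟩
  have lEB : Tendsto (fun x : ℝ => Real.exp (-(m * x)) *
      ((-x + d - c) * stdNormalCDF ((-x + d) / k) + k * stdNormalPDF ((-x + d) / k)))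
      atTop (nhds 0) := by
    have h1 : Tendsto (fun x : ℝ => Real.exp (-(m * x)) * ((-1) * x + (d - c)) *
        stdNormalCDF ((-x + d) / k)) atTop (nhds 0) :=
      (tendsto_exp_neg_mul_linear hm (-1) (d - c)).zero_mul_isBoundedUnder_le hNbdd
    have h2 : Tendsto (fun x : ℝ => Real.exp (-(m * x)) * (k * stdNormalPDF ((-x + d) / k)))
        atTop (nhds 0) := by
      have h := lE.mul (lφt.const_mul k)
      rw [mul_zero, zero_mul] at h
      exact h
    have h3 := h1.add h2
    rw [add_zero] at h3
    exact h3.congr fun x => by ring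
  have hdBbdd : Filter.IsBoundedUnder (· ≤ ·) atTop
      (fun x : ℝ => ‖-stdNormalCDF ((-x + d) / k) + c / k * stdNormalPDF ((-x + d) / k)‖) := by
    apply isBoundedUnder_of
    refine ⟨1 + |c / k| * (1 / Real.sqrt (2 * π)), fun x => ?_⟩
    rw [Real.norm_eq_abs]
    have h1 : |(-stdNormalCDF ((-x + d) / k))| ≤ 1 := by
      rw [abs_neg, abs_of_nonneg (stdNormalCDF_nonneg _)]
      exact stdNormalCDF_le_one _
    have h2 : |c / k * stdNormalPDF ((-x + d) / k)| ≤ |c / k| * (1 / Real.sqrt (2 * π)) := by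
      rw [abs_mul]
      refine mul_le_mul_of_nonneg_left ?_ (abs_nonneg _)
      rw [abs_of_nonneg (stdNormalPDF_nonneg _)]
      exact stdNormalPDF_le _
    exact (abs_add_le _ _).trans (add_le_add h1 h2)
  have lEdB : Tendsto (fun x : ℝ => Real.exp (-(m * x)) *
      (-stdNormalCDF ((-x + d) / k) + c / k * stdNormalPDF ((-x + d) / k))) atTop (nhds 0) :=
    lE.zero_mul_isBoundedUnder_le hdBbdd
  -- Part 1
  have part1 : Tendsto (fun x : ℝ =>
      ((x + d - c) * stdNormalCDF ((x + d) / k) + k * stdNormalPDF ((x + d) / k))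
        - Real.exp (-(m * x)) *
            ((-x + d - c) * stdNormalCDF ((-x + d) / k) + k * stdNormalPDF ((-x + d) / k)))
      atTop atTop := by
    have hA_top : Tendsto (fun x : ℝ =>
        (x + d - c) * stdNormalCDF ((x + d) / k) + k * stdNormalPDF ((x + d) / k))
        atTop atTop := by
      apply tendsto_atTop_add_nhds (C := k * 0)
      · refine Filter.Tendsto.atTop_mul_pos one_pos ?_ lN1
        have := tendsto_atTop_add_const_right atTop (d - c) (tendsto_id (α := ℝ))
        exact this.congr fun x => by simp only [id_eq]; ring
      · exact lφs.const_mul k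
    have h := tendsto_atTop_add_nhds hA_top lEB.neg
    exact h.congr fun x => by ring
  -- Part 2
  have ldA : Tendsto (fun x : ℝ =>
      stdNormalCDF ((x + d) / k) - c / k * stdNormalPDF ((x + d) / k)) atTop (nhds 1) := by
    have h := lN1.sub (lφs.const_mul (c / k))
    rw [mul_zero, sub_zero] at h
    exact h
  have lmEB : Tendsto (fun x : ℝ => -m * Real.exp (-(m * x)) *
      ((-x + d - c) * stdNormalCDF ((-x + d) / k) + k * stdNormalPDF ((-x + d) / k)))
      atTop (nhds 0) := by
    have h := lEB.const_mul (-m)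
    rw [mul_zero] at h
    exact h.congr fun x => by ring
  have part2 : Tendsto (fun x : ℝ =>
      (stdNormalCDF ((x + d) / k) - c / k * stdNormalPDF ((x + d) / k))
        - (-m * Real.exp (-(m * x)) *
              ((-x + d - c) * stdNormalCDF ((-x + d) / k) + k * stdNormalPDF ((-x + d) / k))
            + Real.exp (-(m * x)) *
              (-stdNormalCDF ((-x + d) / k) + c / k * stdNormalPDF ((-x + d) / k))))
      atTop (nhds 1) := by
    have h := ldA.sub (lmEB.add lEdB)
    rw [add_zero, sub_zero] at h
    exact h
  -- Part 3
  have lg1 : Tendsto (fun x : ℝ => stdNormalPDF ((x + d) / k) * (1 / k)) atTop (nhds 0) := by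
    have h := lφs.mul_const (1 / k)
    rw [zero_mul] at h
    exact h
  have lg2 : Tendsto (fun x : ℝ =>
      c / k * ((-((x + d) / k) * stdNormalPDF ((x + d) / k)) * (1 / k))) atTop (nhds 0) := by
    have h := (lsφs.mul_const (1 / k)).const_mul (-(c / k))
    rw [zero_mul, mul_zero] at h
    exact h.congr fun x => by ring
  have lG1 : Tendsto (fun x : ℝ =>
      stdNormalPDF ((x + d) / k) * (1 / k)
        - c / k * ((-((x + d) / k) * stdNormalPDF ((x + d) / k)) * (1 / k))) atTop (nhds 0) := by
    have h := lg1.sub lg2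
    rw [sub_zero] at h
    exact h
  have lg3 : Tendsto (fun x : ℝ => -m * (-m * Real.exp (-(m * x))) *
      ((-x + d - c) * stdNormalCDF ((-x + d) / k) + k * stdNormalPDF ((-x + d) / k)))
      atTop (nhds 0) := by
    have h := lEB.const_mul (m * m)
    rw [mul_zero] at h
    exact h.congr fun x => by ring
  have lg4 : Tendsto (fun x : ℝ => -m * Real.exp (-(m * x)) *
      (-stdNormalCDF ((-x + d) / k) + c / k * stdNormalPDF ((-x + d) / k))) atTop (nhds 0) := by
    have h := lEdB.const_mul (-m)
    rw [mul_zero] at h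
    exact h.congr fun x => by ring
  have lddB : Tendsto (fun x : ℝ =>
      -(stdNormalPDF ((-x + d) / k) * (-1 / k))
        + c / k * ((-((-x + d) / k) * stdNormalPDF ((-x + d) / k)) * (-1 / k)))
      atTop (nhds 0) := by
    have h1 := lφt.mul_const (1 / k)
    have h2 := (ltφt.mul_const (-1 / k)).const_mul (-(c / k))
    have h := h1.add h2
    rw [zero_mul, zero_mul, mul_zero, add_zero] at h
    exact h.congr fun x => by ring
  have lg5 : Tendsto (fun x : ℝ => Real.exp (-(m * x)) *
      (-(stdNormalPDF ((-x + d) / k) * (-1 / k))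
        + c / k * ((-((-x + d) / k) * stdNormalPDF ((-x + d) / k)) * (-1 / k))))
      atTop (nhds 0) := by
    have h := lE.mul lddB
    rw [mul_zero] at h
    exact h
  have part3 : Tendsto (fun x : ℝ =>
      (stdNormalPDF ((x + d) / k) * (1 / k)
          - c / k * ((-((x + d) / k) * stdNormalPDF ((x + d) / k)) * (1 / k)))
        - ((-m * (-m * Real.exp (-(m * x))) *
                ((-x + d - c) * stdNormalCDF ((-x + d) / k) + k * stdNormalPDF ((-x + d) / k))
              + -m * Real.exp (-(m * x)) *
                (-stdNormalCDF ((-x + d) / k) + c / k * stdNormalPDF ((-x + d) / k)))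
            + (-m * Real.exp (-(m * x)) *
                (-stdNormalCDF ((-x + d) / k) + c / k * stdNormalPDF ((-x + d) / k))
              + Real.exp (-(m * x)) *
                (-(stdNormalPDF ((-x + d) / k) * (-1 / k))
                  + c / k * ((-((-x + d) / k) * stdNormalPDF ((-x + d) / k)) * (-1 / k))))))
      atTop (nhds 0) := by
    have h := lG1.sub ((lg3.add lg4).add (lg4.add lg5))
    rw [show ((0:ℝ) - (0 + 0 + (0 + 0))) = 0 from by norm_num] at h
    exact h
  refine ⟨part1, ?_, ?_⟩
  · rw [hderiv1]
    exact part2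
  · rw [hderiv1, hderiv2]
    exact part3

theorem BM_reward_asymptotics (μ σ Δ lam : ℝ) (hμ : 0 < μ) (hσ : 0 < σ) (hΔ : 0 < Δ)
    (hlam : 0 < lam) (a : ℝ) (ha : 0 ≤ a) (r : ℝ → ℝ)
    (hr : r = fun x =>
      (x + μ * Δ - a - lam) * stdNormalCDF ((x + μ * Δ) / (σ * Real.sqrt Δ))
        + σ * Real.sqrt Δ * stdNormalPDF ((x + μ * Δ) / (σ * Real.sqrt Δ))
        - Real.exp (-2 * μ * x / σ ^ 2) *
            ((-x + μ * Δ - a - lam) * stdNormalCDF ((-x + μ * Δ) / (σ * Real.sqrt Δ))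
              + σ * Real.sqrt Δ * stdNormalPDF ((-x + μ * Δ) / (σ * Real.sqrt Δ)))) :
    Tendsto r atTop atTop ∧ Tendsto (deriv r) atTop (nhds 1) ∧
      Tendsto (deriv (deriv r)) atTop (nhds 0) := by
  have hk : 0 < σ * Real.sqrt Δ := mul_pos hσ (Real.sqrt_pos.2 hΔ)
  have hm : 0 < 2 * μ / σ ^ 2 := by positivity
  apply BM_aux (σ * Real.sqrt Δ) (2 * μ / σ ^ 2) (a + lam) (μ * Δ) hk hm r
  rw [hr]
  funext x
  rw [show -2 * μ * x / σ ^ 2 = -(2 * μ / σ ^ 2 * x) from by ring]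
  ring
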